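/- Let N ≥ 2 and k ≥ 1 be integers with k < N, and suppose the set {1, 2, …, k} splits ℤ_N with splitter set S. Let H be a subgroup of ℤ_N with |H| < N, and let d ≥ 1 be an integer with d · |H| ≤ k such that every integer t with 1 ≤ t ≤ d is coprime to N. Let s₁, …, s_r be the distinct elements of S that are units of ℤ_N, and for each i set W_i = {s_i + x : x ∈ H, s_i + x is a unit of ℤ_N} and T·W_i = {t • w : 1 ≤ t ≤ d, w ∈ W_i}. Then the union of the sets T·W_i (1 ≤ i ≤ r) is contained in the group of units of ℤ_N, and the sum of the cardinalities |T·W_1| + ⋯ + |T·W_r| is at most φ(N), where φ is Euler's totient function. -/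

import Mathlib

/-- `S ⊆ G` is a splitter set for the multiplier set `{1, 2, …, k}` in the finite
abelian group `G`: every nonzero `g ∈ G` has a unique representation `g = m • s`
with `m ∈ {1, …, k}` and `s ∈ S`. -/
def IsSplitting {G : Type*} [AddCommGroup G] (k : ℕ) (S : Set G) : Prop :=
  ∀ g : G, g ≠ 0 → ∃! ms : ℤ × G,
    ms.1 ∈ Set.Icc (1 : ℤ) (k : ℤ) ∧ ms.2 ∈ S ∧ ms.1 • ms.2 = g

/-- `S` is a splitter set for `{1, …, k}` in `G`, and the splitting is purely
singular: every prime divisor of `|G|` divides some multiplier `m ∈ {1, …, k}`. -/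
def IsPurelySingularSplitting {G : Type*} [AddCommGroup G] (k : ℕ) (S : Set G) : Prop :=
  IsSplitting k S ∧
    ∀ q : ℕ, q.Prime → q ∣ Nat.card G →
      ∃ m : ℤ, m ∈ Set.Icc (1 : ℤ) (k : ℤ) ∧ (q : ℤ) ∣ m

open scoped Classical in
/-- Lemma 2(b): the sets `T·W_i`, for `s_i` ranging over the unit elements of the
splitter set `S`, all lie in the unit group of `ℤ_N`, and the sum of their
cardinalities is at most `φ(N)`. -/
theorem splitting_translates_in_units_sum_le_totient
    (N k d : ℕ) (hN : 2 ≤ N) (hk : 1 ≤ k) (hkN : k < N)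
    (S : Finset (ZMod N)) (h : IsSplitting k (S : Set (ZMod N)))
    (H : AddSubgroup (ZMod N)) (hH : Nat.card H < N)
    (hd : 1 ≤ d) (hdH : d * Nat.card H ≤ k)
    (hT : ∀ t : ℕ, 1 ≤ t → t ≤ d → Nat.Coprime t N) :
    (∀ s ∈ S, IsUnit s →
        {g : ZMod N | ∃ t : ℕ, 1 ≤ t ∧ t ≤ d ∧
            ∃ x ∈ H, IsUnit (s + x) ∧ g = t • (s + x)}
          ⊆ {g : ZMod N | IsUnit g}) ∧
      ∑ s ∈ S.filter (fun s => IsUnit s),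
          {g : ZMod N | ∃ t : ℕ, 1 ≤ t ∧ t ≤ d ∧
              ∃ x ∈ H, IsUnit (s + x) ∧ g = t • (s + x)}.ncard
        ≤ Nat.totient N := by
  set W : ZMod N → Set (ZMod N) := fun s =>
    {g : ZMod N | ∃ t : ℕ, 1 ≤ t ∧ t ≤ d ∧
        ∃ x ∈ H, IsUnit (s + x) ∧ g = t • (s + x)} with hW
  set F := S.filter (fun s => IsUnit s) with hF
  have hFmem : ∀ s, s ∈ F → s ∈ S ∧ IsUnit s := by
    intro s hs
    rw [hF, Finset.mem_filter] at hs
    exact hs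
  have : NeZero N := ⟨by omega⟩
  have hcH1 : 1 ≤ Nat.card H := Nat.card_pos
  -- part (a)
  have ha : ∀ s ∈ S, IsUnit s → W s ⊆ {g : ZMod N | IsUnit g} := by
    rintro s hs hus g ⟨t, ht1, htd, x, hx, hux, rfl⟩
    simp only [Set.mem_setOf_eq, nsmul_eq_mul]
    exact ((ZMod.isUnit_iff_coprime t N).mpr (hT t ht1 htd)).mul hux
  refine ⟨ha, ?_⟩
  -- key extraction lemma
  have key : ∀ s ∈ S, ∀ g ∈ W s, ∃ t : ℕ, 1 ≤ t ∧ t ≤ d ∧ (Nat.card H) • g = (t * (Nat.card H)) • s := by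
    rintro s hs g ⟨t, ht1, htd, x, hx, hux, rfl⟩
    refine ⟨t, ht1, htd, ?_⟩
    have hx0 : (Nat.card H) • x = 0 := by
      have h1 : (Nat.card H) • (⟨x, hx⟩ : H) = 0 := card_nsmul_eq_zero'
      have h2 := congrArg (Subtype.val) h1
      rw [AddSubmonoidClass.coe_nsmul, ZeroMemClass.coe_zero] at h2
      exact h2
    rw [smul_smul, smul_add]
    have h3 : ((Nat.card H) * t) • x = 0 := by
      rw [mul_comm, ← smul_smul, hx0, smul_zero]
    rw [h3, add_zero, mul_comm]
  -- disjointness across distinct unit elements of S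
  have hdisj : ∀ s ∈ S, IsUnit s → ∀ s' ∈ S, IsUnit s' → ∀ g, g ∈ W s → g ∈ W s' → s = s' := by
    intro s hs hus s' hs' hus' g hg hg'
    obtain ⟨t, ht1, htd, heq⟩ := key s hs g hg
    obtain ⟨t', ht1', htd', heq'⟩ := key s' hs' g hg'
    have hbound : ∀ u : ℕ, 1 ≤ u → u ≤ d → (1 : ℤ) ≤ (u * (Nat.card H) : ℕ) ∧ ((u * (Nat.card H) : ℕ) : ℤ) ≤ k := by
      intro u h1 h2
      constructor
      · exact_mod_cast Nat.one_le_iff_ne_zero.mpr (by positivity)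
      · exact_mod_cast le_trans (Nat.mul_le_mul_right (Nat.card H) h2) hdH
    have hy0 : (Nat.card H) • g ≠ 0 := by
      rw [heq]
      intro hzero
      have : ((t * (Nat.card H) : ℕ) : ZMod N) * s = 0 := by
        rw [← nsmul_eq_mul]; exact hzero
      have hcast : ((t * (Nat.card H) : ℕ) : ZMod N) = 0 := by
        rcases hus with ⟨u, rfl⟩
        have := congrArg (· * (↑u⁻¹ : ZMod N)) this
        simpa [mul_assoc] using this
      have hdvd : N ∣ t * (Nat.card H) := (ZMod.natCast_eq_zero_iff _ _).mp hcast
      have h1 : 1 ≤ t * (Nat.card H) := Nat.one_le_iff_ne_zero.mpr (by positivity)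
      have h2 : t * (Nat.card H) ≤ k := le_trans (Nat.mul_le_mul_right (Nat.card H) htd) hdH
      have := Nat.le_of_dvd (by omega) hdvd
      omega
    obtain ⟨hb1, hb2⟩ := hbound t ht1 htd
    obtain ⟨hb1', hb2'⟩ := hbound t' ht1' htd'
    have hp1 : (((t * (Nat.card H) : ℕ) : ℤ), s) ∈ {ms : ℤ × ZMod N |
        ms.1 ∈ Set.Icc (1 : ℤ) (k : ℤ) ∧ ms.2 ∈ (S : Set (ZMod N)) ∧ ms.1 • ms.2 = (Nat.card H) • g} := by
      refine ⟨⟨hb1, hb2⟩, hs, ?_⟩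
      simp only [natCast_zsmul]
      exact heq.symm
    have hp2 : (((t' * (Nat.card H) : ℕ) : ℤ), s') ∈ {ms : ℤ × ZMod N |
        ms.1 ∈ Set.Icc (1 : ℤ) (k : ℤ) ∧ ms.2 ∈ (S : Set (ZMod N)) ∧ ms.1 • ms.2 = (Nat.card H) • g} := by
      refine ⟨⟨hb1', hb2'⟩, hs', ?_⟩
      simp only [natCast_zsmul]
      exact heq'.symm
    have := (h ((Nat.card H) • g) hy0).unique hp1 hp2
    exact congrArg Prod.snd this
  -- now the counting
  have hfin : ∀ s, (W s).Finite := fun s => Set.toFinite _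
  have hsum : ∑ s ∈ F, (W s).ncard
      = ((F).biUnion (fun s => (hfin s).toFinset)).card := by
    rw [Finset.card_biUnion]
    · exact Finset.sum_congr rfl fun s _ => Set.ncard_eq_toFinset_card (W s) (hfin s)
    · intro s hs s' hs' hne
      replace hs := hFmem s hs
      replace hs' := hFmem s' hs'
      show Disjoint (hfin s).toFinset (hfin s').toFinset
      rw [Finset.disjoint_left]
      intro g hg hg'
      rw [Set.Finite.mem_toFinset] at hg hg'
      exact hne (hdisj s hs.1 hs.2 s' hs'.1 hs'.2 g hg hg')
  have hsub : ((F).biUnion (fun s => (hfin s).toFinset))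
      ⊆ Finset.univ.filter IsUnit := by
    intro g hg
    rw [Finset.mem_biUnion] at hg
    obtain ⟨s, hs, hgs⟩ := hg
    replace hs := hFmem s hs
    rw [Set.Finite.mem_toFinset] at hgs
    have := ha s hs.1 hs.2 hgs
    simp only [Set.mem_setOf_eq] at this
    simp [this]
  have e : (ZMod N)ˣ ≃ {x : ZMod N // IsUnit x} :=
    ⟨fun u => ⟨u, u.isUnit⟩, fun x => x.2.unit, fun u => Units.ext rfl,
      fun x => Subtype.ext x.2.unit_spec⟩
  have hfilter : (Finset.univ.filter (fun x : ZMod N => IsUnit x)).card = Nat.totient N := by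
    rw [← Fintype.card_subtype, ← Fintype.card_congr e, ZMod.card_units_eq_totient N]
  show ∑ s ∈ F, (W s).ncard ≤ Nat.totient N
  rw [hsum, ← hfilter]
  exact Finset.card_le_card hsub
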